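/- Let t ≥ 1 and let n be a multiple of 2t with n ≥ 4t. Let w = (10)^t 1^{2t} c₁ c₂ … c_{(n−4t)/(2t)}, where each c_i is an arbitrary Catalan sequence of length 2t. Then the prefix normal form of w is w̃ = 1^{2t} (01)^{(n−2t)/2}; equivalently, the profile of w satisfies f_w(k) = min(k, t + ⌊k/2⌋) for all 0 ≤ k ≤ n. -/

import Mathlib

/-- Number of ones of the infinite binary word `w` in the 0-indexed
half-open interval of positions `[a, b)`. Thus `cnt w j (j+k)` is the number
of 1s in the subword `w[j+1, j+k]` (1-indexed), and `cnt w 0 k` is the number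
of 1s in the prefix of length `k`. -/
def cnt (w : ℕ → Bool) (a b : ℕ) : ℕ :=
  ((Finset.Ico a b).filter (fun i => w i = true)).card

/-- Extend a finite binary word (a list, `true = 1`, `false = 0`) to an
infinite word by `false`s. -/
def extL (l : List Bool) : ℕ → Bool :=
  fun i => l.getD i false

lemma cnt_le (w : ℕ → Bool) (a b : ℕ) : cnt w a b ≤ b - a := by
  calc cnt w a b ≤ (Finset.Ico a b).card := Finset.card_filter_le _ _
  _ = b - a := Nat.card_Ico a b

lemma cnt_split (w : ℕ → Bool) {a b c : ℕ} (h1 : a ≤ b) (h2 : b ≤ c) :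
    cnt w a c = cnt w a b + cnt w b c := by
  unfold cnt
  rw [← Finset.Ico_union_Ico_eq_Ico h1 h2, Finset.filter_union,
    Finset.card_union_of_disjoint]
  exact (Finset.Ico_disjoint_Ico_consecutive a b c).mono (Finset.filter_subset _ _) (Finset.filter_subset _ _)

lemma cnt_congr {w w' : ℕ → Bool} {a b : ℕ} (h : ∀ i, a ≤ i → i < b → w i = w' i) :
    cnt w a b = cnt w' a b := by
  unfold cnt; apply congrArg; apply Finset.filter_congr
  intro i hi; simp only [Finset.mem_Ico] at hi; rw [h i hi.1 hi.2]

lemma cnt_shift (w : ℕ → Bool) (d a b : ℕ) :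
    cnt (fun i => w (d + i)) a b = cnt w (d + a) (d + b) := by
  unfold cnt
  rw [← Finset.map_add_left_Ico, Finset.filter_map, Finset.card_map]
  rfl

lemma cnt_all_true {w : ℕ → Bool} {a b : ℕ} (h : ∀ i, a ≤ i → i < b → w i = true) :
    cnt w a b = b - a := by
  unfold cnt
  rw [Finset.filter_true_of_mem, Nat.card_Ico]
  intro i hi; simp only [Finset.mem_Ico] at hi; exact h i hi.1 hi.2

lemma cnt_zero {w : ℕ → Bool} {a b : ℕ} (h : ∀ i, a ≤ i → i < b → w i = false) :
    cnt w a b = 0 := by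
  unfold cnt
  rw [Finset.card_eq_zero, Finset.filter_eq_empty_iff]
  intro i hi; simp only [Finset.mem_Ico] at hi; simp [h i hi.1 hi.2]

lemma extL_append_left {l r : List Bool} {i : ℕ} (h : i < l.length) :
    extL (l ++ r) i = extL l i := by
  simp [extL, List.getD, List.getElem?_append_left h]

lemma extL_append_right (l r : List Bool) (i : ℕ) :
    extL (l ++ r) (l.length + i) = extL r i := by
  simp [extL, List.getD, List.getElem?_append_right (Nat.le_add_right _ _)]

lemma extL_alt (t : ℕ) : ∀ i, i < 2 * t →
    extL ((List.replicate t [true, false]).flatten) i = decide (i % 2 = 0) := by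
  induction t with
  | zero => omega
  | succ t ih =>
    intro i hi
    rw [List.replicate_succ, List.flatten_cons]
    match i with
    | 0 => rfl
    | 1 => rfl
    | (j+2) =>
      have : ([true, false] : List Bool).length = 2 := rfl
      have h2 : extL ([true, false] ++ (List.replicate t [true, false]).flatten) (2 + j)
          = extL ((List.replicate t [true, false]).flatten) j := by
        simpa using extL_append_right [true, false] _ j
      rw [show j + 2 = 2 + j by omega, h2, ih j (by omega),
        show (2 + j) % 2 = j % 2 from Nat.add_mul_mod_self_left j 2 1 ▸ by omega]

lemma cnt_succ (w : ℕ → Bool) (a b : ℕ) (h : a ≤ b) :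
    cnt w a (b + 1) = cnt w a b + (if w b then 1 else 0) := by
  unfold cnt
  rw [Nat.Ico_succ_right_eq_insert_Ico h, Finset.filter_insert]
  split
  · rw [Finset.card_insert_of_notMem (by simp)]
  · rfl

lemma cnt_parity : ∀ x : ℕ, cnt (fun i => decide (i % 2 = 0)) 0 x = (x + 1) / 2 := by
  intro x
  induction x with
  | zero => simp [cnt]
  | succ x ih =>
    rw [cnt_succ _ _ _ (Nat.zero_le _), ih]
    by_cases h : x % 2 = 0
    · simp only [h]; simp; omega
    · simp only [h]; simp; omega

lemma length_flatten_repl (t : ℕ) : ((List.replicate t [true, false]).flatten).length = 2 * t := by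
  induction t with
  | zero => rfl
  | succ t ih => rw [List.replicate_succ, List.flatten_cons]; simp at ih ⊢; omega

/-- The profile `f_w(k)` of a word of length `n`: the maximum number of 1s in
any subword of length `k`, i.e. `max_{0 ≤ j ≤ n-k} |w[j+1, j+k]|₁`. -/
def profile (n : ℕ) (w : ℕ → Bool) (k : ℕ) : ℕ :=
  (Finset.range (n - k + 1)).sup (fun j => cnt w j (j + k))

/-- A Catalan sequence of length `2t`: a binary word `c` of length `2t` with
`|c[1,i]|₁ ≤ i/2` for all `i = 1, …, 2t` and `|c|₁ = t`. -/
def IsCatalanSeq (t : ℕ) (c : List Bool) : Prop :=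
  c.length = 2 * t ∧ (∀ i : ℕ, i ≤ 2 * t → 2 * cnt (extL c) 0 i ≤ i) ∧
    cnt (extL c) 0 (2 * t) = t

lemma cnt_extL_prefix {l r : List Bool} {m : ℕ} (h : m ≤ l.length) :
    cnt (extL (l ++ r)) 0 m = cnt (extL l) 0 m :=
  cnt_congr (fun i _ hi => extL_append_left (by omega))

lemma cnt_extL_tail (l r : List Bool) (a b : ℕ) :
    cnt (extL (l ++ r)) (l.length + a) (l.length + b) = cnt (extL r) a b := by
  rw [← cnt_shift]
  exact cnt_congr (fun i _ _ => extL_append_right l r i)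

lemma cat_split {t : ℕ} {c : List Bool} (cs' : List (List Bool))
    (hc : IsCatalanSeq t c) {m : ℕ} (hm : 2 * t ≤ m) :
    cnt (extL ((c :: cs').flatten)) 0 m = t + cnt (extL cs'.flatten) 0 (m - 2 * t) := by
  rw [List.flatten_cons, cnt_split _ (Nat.zero_le (2 * t)) hm]
  congr 1
  · rw [cnt_extL_prefix (le_of_eq hc.1.symm)]
    exact hc.2.2
  · have h := cnt_extL_tail c cs'.flatten 0 (m - 2 * t)
    rw [hc.1, Nat.add_zero, Nat.add_sub_cancel' hm] at h
    exact h

lemma cat_ub (t : ℕ) : ∀ (cs : List (List Bool)), (∀ c ∈ cs, IsCatalanSeq t c) →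
    ∀ m, 2 * cnt (extL cs.flatten) 0 m ≤ m := by
  intro cs
  induction cs with
  | nil =>
    intro _ m
    have h0 : cnt (extL ([] : List (List Bool)).flatten) 0 m = 0 :=
      cnt_zero (fun i _ _ => rfl)
    omega
  | cons c cs' ih =>
    intro h m
    have hc := h c (List.mem_cons_self)
    rcases le_or_gt m (2 * t) with hm | hm
    · rw [List.flatten_cons, cnt_extL_prefix (by rw [hc.1]; omega)]
      exact hc.2.1 m hm
    · rw [cat_split cs' hc hm.le]
      have := ih (fun c hc => h c (List.mem_cons_of_mem _ hc)) (m - 2 * t)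
      omega

lemma cat_lb (t : ℕ) : ∀ (cs : List (List Bool)), (∀ c ∈ cs, IsCatalanSeq t c) →
    ∀ m, m ≤ 2 * t * cs.length → m ≤ 2 * cnt (extL cs.flatten) 0 m + 2 * t := by
  intro cs
  induction cs with
  | nil => intro _ m hm; simp at hm; omega
  | cons c cs' ih =>
    intro h m hm
    rcases le_or_gt m (2 * t) with hm2 | hm2
    · omega
    · have hc := h c (List.mem_cons_self)
      rw [cat_split cs' hc hm2.le]
      have := ih (fun c hc => h c (List.mem_cons_of_mem _ hc)) (m - 2 * t)
        (by simp [List.length_cons, Nat.mul_add] at hm ⊢; omega)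
      omega

lemma cat_exact (t : ℕ) : ∀ (cs : List (List Bool)), (∀ c ∈ cs, IsCatalanSeq t c) →
    ∀ q, q ≤ cs.length → cnt (extL cs.flatten) 0 (2 * t * q) = t * q := by
  intro cs
  induction cs with
  | nil =>
    intro _ q hq
    simp at hq
    subst hq
    simp [cnt]
  | cons c cs' ih =>
    intro h q hq
    match q with
    | 0 => simp [cnt]
    | (q' + 1) =>
      have hc := h c (List.mem_cons_self)
      rw [cat_split cs' hc (by nlinarith)]
      rw [show 2 * t * (q' + 1) - 2 * t = 2 * t * q' by ring_nf; omega]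
      rw [ih (fun c hc => h c (List.mem_cons_of_mem _ hc)) q' (by simpa using hq)]
      ring


/-- Let `t ≥ 1`, let `n` be a multiple of `2t` with `n ≥ 4t`, and let
`w = (10)^t 1^{2t} c₁ c₂ ⋯ c_{(n-4t)/(2t)}` where each `cᵢ` is an arbitrary
Catalan sequence of length `2t`. Then the prefix normal form of `w` is
`1^{2t} (01)^{(n-2t)/2}`; equivalently, the profile of `w` satisfies
`f_w(k) = min (k, t + ⌊k/2⌋)` for all `0 ≤ k ≤ n`. -/
theorem profile_of_catalan_construction (t : ℕ) (ht : 1 ≤ t) (n : ℕ)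
    (hn : 4 * t ≤ n) (hdvd : 2 * t ∣ n) (cs : List (List Bool))
    (hlen : cs.length = (n - 4 * t) / (2 * t))
    (hcat : ∀ c ∈ cs, IsCatalanSeq t c) :
    ∀ k : ℕ, k ≤ n →
      profile n (extL ((List.replicate t [true, false]).flatten ++
          List.replicate (2 * t) true ++ cs.flatten)) k =
        min k (t + k / 2) := by
  intro k hk
  set A := (List.replicate t [true, false]).flatten with hA
  set B := List.replicate (2 * t) true with hB
  set C := cs.flatten with hC
  set w := extL (A ++ B ++ C) with hwdef
  have h2t : 0 < 2 * t := by omega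
  have hAlen : A.length = 2 * t := length_flatten_repl t
  have hBlen : B.length = 2 * t := List.length_replicate
  obtain ⟨N, hN⟩ := hdvd
  have h24 : n - 4 * t = 2 * t * (N - 2) := by
    rw [hN, Nat.mul_sub]
    congr 1
    ring
  have hN2 : 2 ≤ N := by
    by_contra hcon
    push_neg at hcon
    have : 2 * t * N ≤ 2 * t * 1 := Nat.mul_le_mul_left _ (by omega)
    omega
  have hcsl : cs.length = N - 2 := by
    rw [hlen, h24, Nat.mul_div_cancel_left _ h2t]
  have hClen' : 2 * t * cs.length = n - 4 * t := by rw [hcsl, ← h24]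
  -- pointwise characterization of w
  have hw1 : ∀ i, i < 2 * t → w i = decide (i % 2 = 0) := by
    intro i hi
    rw [hwdef, extL_append_left (by rw [List.length_append, hAlen, hBlen]; omega),
      extL_append_left (by omega : i < A.length), hA, extL_alt t i hi]
  have hw2 : ∀ i, 2 * t ≤ i → i < 4 * t → w i = true := by
    intro i hi1 hi2
    rw [hwdef, extL_append_left (by rw [List.length_append, hAlen, hBlen]; omega)]
    have h := extL_append_right A B (i - 2 * t)
    rw [hAlen, Nat.add_sub_cancel' hi1] at h
    rw [h, hB, extL]
    have : i - 2 * t < 2 * t := by omega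
    simp [List.getD, List.getElem?_replicate, this]
  have hw3 : ∀ i, w (4 * t + i) = extL C i := by
    intro i
    have h := extL_append_right (A ++ B) C i
    rw [List.length_append, hAlen, hBlen, show 2 * t + 2 * t = 4 * t by ring] at h
    rw [hwdef]
    exact h
  -- prefix counts
  have hP1 : ∀ x, x ≤ 2 * t → cnt w 0 x = (x + 1) / 2 := by
    intro x hx
    rw [cnt_congr (fun i _ h2 => hw1 i (by omega)), cnt_parity]
  have hP2 : ∀ x, 2 * t ≤ x → x ≤ 4 * t → cnt w 0 x = x - t := by
    intro x h1 h2
    rw [cnt_split w (Nat.zero_le _) h1, hP1 (2 * t) le_rfl,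
      cnt_all_true (fun i hi1 hi2 => hw2 i hi1 (by omega))]
    omega
  have hP3 : ∀ x, 4 * t ≤ x → cnt w 0 x = 3 * t + cnt (extL C) 0 (x - 4 * t) := by
    intro x hx
    rw [cnt_split w (Nat.zero_le _) hx, hP2 (4 * t) (by omega) le_rfl]
    have h2 := cnt_shift w (4 * t) 0 (x - 4 * t)
    rw [Nat.add_zero, Nat.add_sub_cancel' hx] at h2
    rw [← h2, cnt_congr (fun i _ _ => hw3 i)]
    omega
  -- global bounds
  have hUB : ∀ x, 2 * cnt w 0 x ≤ 2 * t + x := by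
    intro x
    rcases le_or_gt x (2 * t) with h1 | h1
    · rw [hP1 x h1]; omega
    · rcases le_or_gt x (4 * t) with h2 | h2
      · rw [hP2 x h1.le h2]; omega
      · rw [hP3 x h2.le]
        have h3 := cat_ub t cs hcat (x - 4 * t)
        rw [← hC] at h3
        omega
  have hLB : ∀ x, x ≤ n → x ≤ 2 * cnt w 0 x := by
    intro x hx
    rcases le_or_gt x (2 * t) with h1 | h1
    · rw [hP1 x h1]; omega
    · rcases le_or_gt x (4 * t) with h2 | h2
      · rw [hP2 x h1.le h2]; omega
      · rw [hP3 x h2.le]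
        have h3 := cat_lb t cs hcat (x - 4 * t) (by rw [hClen']; omega)
        rw [← hC] at h3
        omega
  unfold profile
  apply le_antisymm
  · apply Finset.sup_le
    intro j hj
    rw [Finset.mem_range] at hj
    have hjk : j + k ≤ n := by omega
    refine le_min ?_ ?_
    · have := cnt_le w j (j + k); omega
    · have hsp := cnt_split w (Nat.zero_le j) (Nat.le_add_right j k)
      have h1 := hUB (j + k)
      have h2 := hLB j (by omega)
      omega
  · rcases le_or_gt k (2 * t) with hk2 | hk2
    · have hmem : 2 * t ∈ Finset.range (n - k + 1) := by rw [Finset.mem_range]; omega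
      have hle := Finset.le_sup (f := fun j => cnt w j (j + k)) hmem
      have hc : cnt w (2 * t) (2 * t + k) = k := by
        rw [cnt_all_true (fun i hi1 hi2 => hw2 i hi1 (by omega))]
        omega
      calc min k (t + k / 2) ≤ k := min_le_left _ _
        _ = cnt w (2 * t) (2 * t + k) := hc.symm
        _ ≤ _ := hle
    · set q := (k + 2 * t - 1) / (2 * t) with hqdef
      obtain ⟨M, hM⟩ : ∃ M, M = 2 * t * q := ⟨_, rfl⟩
      obtain ⟨r, hr1, hr2⟩ : ∃ r, r < 2 * t ∧ M + r = k + 2 * t - 1 := by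
        refine ⟨(k + 2 * t - 1) % (2 * t), Nat.mod_lt _ h2t, ?_⟩
        rw [hM, hqdef]
        exact Nat.div_add_mod _ _
      have hq2 : 2 ≤ q := by
        by_contra hcon
        push_neg at hcon
        have h1 : 2 * t * q ≤ 2 * t * 1 := Nat.mul_le_mul_left _ (by omega)
        rw [← hM] at h1
        omega
      have hMn : M ≤ n := by
        by_contra hcon
        push_neg at hcon
        have h1 : N < q := by
          apply Nat.lt_of_mul_lt_mul_left (a := 2 * t)
          rw [← hN, ← hM]
          exact hcon
        have h2 : 2 * t * (N + 1) ≤ 2 * t * q := Nat.mul_le_mul_left _ (by omega)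
        have h3 : 2 * t * (N + 1) = n + 2 * t := by rw [hN]; ring
        rw [← hM, h3] at h2
        omega
      obtain ⟨q', hq'⟩ : ∃ q', q = q' + 2 := ⟨q - 2, by omega⟩
      obtain ⟨T, hT⟩ : ∃ T, T = t * q' := ⟨_, rfl⟩
      have hMT : M = 2 * T + 4 * t := by rw [hM, hq', hT]; ring
      have hq'cs : q' ≤ cs.length := by
        rw [hcsl]
        have : q ≤ N := by
          by_contra hcon
          push_neg at hcon
          have h2 : 2 * t * (N + 1) ≤ 2 * t * q := Nat.mul_le_mul_left _ (by omega)
          have h3 : 2 * t * (N + 1) = n + 2 * t := by rw [hN]; ring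
          rw [← hM, h3] at h2
          omega
        omega
      have hcat' : cnt (extL C) 0 (M - 4 * t) = T := by
        have h1 : M - 4 * t = 2 * t * q' := by
          rw [hMT, Nat.add_sub_cancel, hT]; ring
        rw [h1]
        have h2 := cat_exact t cs hcat q' hq'cs
        rw [← hC] at h2
        rw [h2, hT]
      set j := M - k with hjdef
      have hjkM : j + k = M := by omega
      have hj2t : j ≤ 2 * t := by omega
      have hmem : j ∈ Finset.range (n - k + 1) := by rw [Finset.mem_range]; omega
      have hle := Finset.le_sup (f := fun j => cnt w j (j + k)) hmem
      have hsp := cnt_split w (Nat.zero_le j) (Nat.le_add_right j k)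
      rw [show cnt w 0 (j + k) = cnt w 0 M from by rw [hjkM]] at hsp
      have hcnt : cnt w 0 M = 3 * t + T := by
        rw [hP3 M (by omega), hcat']
      have hPj : cnt w 0 j = (j + 1) / 2 := hP1 j hj2t
      have hfin : t + k / 2 ≤ cnt w j (j + k) := by omega
      calc min k (t + k / 2) ≤ t + k / 2 := min_le_right _ _
        _ ≤ cnt w j (j + k) := hfin
        _ ≤ _ := hle
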